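/- Define h_n(p) = Σ_{λ : Γ(λ) = n} (−1)^{ℓ(λ)} p^{rep(λ)}. Then h_n(p) = (1−p)(h_{n−1}(p) − h_{n−2}(p)) for n ≥ 3, with h₁(p) = −1 and h₂(p) = p − 1. -/

import Mathlib

/-- A partition: a nonempty weakly decreasing list of positive integers. -/
def IsPartition (l : List ℕ) : Prop :=
  l ≠ [] ∧ l.Pairwise (· ≥ ·) ∧ ∀ x ∈ l, 0 < x

/-- The perimeter of a partition: largest part plus number of parts minus 1. -/
def perim (l : List ℕ) : ℕ := l.headI + l.length - 1

/-- Number of repeated parts: indices i with λ_i = λ_{i+1}. -/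
def repStat (l : List ℕ) : ℕ :=
  ((List.range (l.length - 1)).filter fun i => l.getD i 0 = l.getD (i + 1) 0).length

/-- Number of even parts. -/
def evenStat (l : List ℕ) : ℕ := l.countP fun x => x % 2 = 0
/-- h_n(p) = Σ_{Γ(λ)=n} (-1)^{ℓ(λ)} p^{rep(λ)} as a polynomial in p. -/
noncomputable def hpoly (n : ℕ) : Polynomial ℤ :=
  ∑ᶠ l ∈ {l : List ℕ | IsPartition l ∧ perim l = n},
    (-1 : Polynomial ℤ) ^ l.length * Polynomial.X ^ repStat l

open Polynomial

lemma repStat_nil : repStat [] = 0 := rfl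
lemma repStat_singleton (a : ℕ) : repStat [a] = 0 := rfl

lemma repStat_cons_cons (a b : ℕ) (t : List ℕ) :
    repStat (a :: b :: t) = (if a = b then 1 else 0) + repStat (b :: t) := by
  unfold repStat
  simp only [List.length_cons, Nat.add_sub_cancel]
  rw [List.range_succ_eq_map, List.filter_cons, List.filter_map]
  simp only [List.getD_cons_zero, List.getD_cons_succ, Function.comp_def, Nat.succ_eq_add_one]
  by_cases hab : a = b <;> simp [hab, Nat.add_comm]

lemma perim_cons (a : ℕ) (t : List ℕ) : perim (a :: t) = a + t.length := by
  simp only [perim, List.headI, List.length_cons]; omega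

lemma isPartition_cons_cons {a b : ℕ} {t : List ℕ} :
    IsPartition (a :: b :: t) ↔ b ≤ a ∧ IsPartition (b :: t) := by
  constructor
  · rintro ⟨-, hs, hpos⟩
    rw [List.pairwise_cons] at hs
    exact ⟨hs.1 b (by simp), by simp, hs.2, fun x hx => hpos x (List.mem_cons_of_mem _ hx)⟩
  · rintro ⟨hab, -, hs, hpos⟩
    refine ⟨by simp, ?_, ?_⟩
    · rw [List.pairwise_cons]
      refine ⟨?_, hs⟩
      intro x hx
      rcases List.mem_cons.1 hx with rfl | hx'
      · exact hab
      · rw [List.pairwise_cons] at hs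
        exact le_trans (hs.1 x hx') hab
    · intro x hx
      rcases List.mem_cons.1 hx with rfl | hx'
      · exact lt_of_lt_of_le (hpos b (by simp)) hab
      · exact hpos x hx'

open Fin.NatCast in
lemma pfin (n : ℕ) : {l : List ℕ | IsPartition l ∧ perim l = n}.Finite := by
  have hsub : {l : List ℕ | IsPartition l ∧ perim l = n} ⊆
      (fun l : List (Fin (n+1)) => l.map Fin.val) '' {l | l.length ≤ n} := by
    rintro l ⟨⟨hne, hs, hpos⟩, hp⟩
    have hh : 1 ≤ l.headI := by
      cases l with
      | nil => exact absurd rfl hne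
      | cons a t => exact hpos a (by simp)
    have hl : 1 ≤ l.length := List.length_pos_iff.mpr hne
    have hlen : l.length ≤ n := by unfold perim at hp; omega
    have hbd : ∀ x ∈ l, x < n + 1 := by
      intro x hx
      cases l with
      | nil => exact absurd rfl hne
      | cons a t =>
        have hax : x ≤ a := by
          rcases List.mem_cons.1 hx with rfl | hx'
          · exact le_refl x
          · exact (List.pairwise_cons.1 hs).1 x hx'
        have han : a + t.length = n := by
          rw [perim_cons] at hp; omega
        omega
    refine ⟨l.map (Nat.cast : ℕ → Fin (n+1)), by simpa using hlen, ?_⟩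
    show List.map Fin.val (List.map Nat.cast l) = l
    rw [List.map_map]
    conv_rhs => rw [← List.map_id l]
    apply List.map_congr_left
    intro x hx
    simp [Fin.val_cast_of_lt (hbd x hx)]
  exact (Set.Finite.image _ (List.finite_length_le _ n)).subset hsub

noncomputable def pterm (l : List ℕ) : Polynomial ℤ :=
  (-1) ^ l.length * Polynomial.X ^ repStat l

noncomputable def hS (n : ℕ) : Finset (List ℕ) := (pfin n).toFinset

lemma mem_hS {n : ℕ} {l : List ℕ} : l ∈ hS n ↔ IsPartition l ∧ perim l = n :=
  Set.Finite.mem_toFinset _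

lemma hpoly_eq (n : ℕ) : hpoly n = ∑ l ∈ hS n, pterm l := by
  rw [hpoly]
  exact finsum_mem_eq_sum_of_subset _
    (fun x hx => mem_hS.2 hx.1) (fun x hx => mem_hS.1 hx)

noncomputable def F1 (n : ℕ) : Finset (List ℕ) := (hS n).filter (fun l => l.length ≤ 1)
noncomputable def hG (n : ℕ) : Finset (List ℕ) := (hS n).filter (fun l => ¬ l.length ≤ 1)
noncomputable def F2 (n : ℕ) : Finset (List ℕ) := (hG n).filter (fun l => l.headI = l.tail.headI)
noncomputable def hG2 (n : ℕ) : Finset (List ℕ) :=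
  (hG n).filter (fun l => ¬ l.headI = l.tail.headI)
noncomputable def F3 (n : ℕ) : Finset (List ℕ) :=
  (hG2 n).filter (fun l => l.headI = l.tail.headI + 1)
noncomputable def F4 (n : ℕ) : Finset (List ℕ) :=
  (hG2 n).filter (fun l => ¬ l.headI = l.tail.headI + 1)

lemma split_hS (n : ℕ) :
    ∑ l ∈ hS n, pterm l = ∑ l ∈ F1 n, pterm l + ∑ l ∈ hG n, pterm l :=
  (Finset.sum_filter_add_sum_filter_not _ _ _).symm

lemma split_hG (n : ℕ) :
    ∑ l ∈ hG n, pterm l = ∑ l ∈ F2 n, pterm l + ∑ l ∈ hG2 n, pterm l :=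
  (Finset.sum_filter_add_sum_filter_not _ _ _).symm

lemma split_hG2 (n : ℕ) :
    ∑ l ∈ hG2 n, pterm l = ∑ l ∈ F3 n, pterm l + ∑ l ∈ F4 n, pterm l :=
  (Finset.sum_filter_add_sum_filter_not _ _ _).symm

/-- Destructure a member of hG: it has length ≥ 2. -/
lemma mem_hG_iff {n : ℕ} {l : List ℕ} :
    l ∈ hG n ↔ (IsPartition l ∧ perim l = n) ∧ 2 ≤ l.length := by
  rw [hG, Finset.mem_filter, mem_hS]
  constructor
  · rintro ⟨h1, h2⟩; exact ⟨h1, by omega⟩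
  · rintro ⟨h1, h2⟩; exact ⟨h1, by omega⟩

lemma exists_cons_cons_of_mem_hG {n : ℕ} {l : List ℕ} (h : l ∈ hG n) :
    ∃ a b t, l = a :: b :: t := by
  have hlen := (mem_hG_iff.1 h).2
  match l with
  | a :: b :: t => exact ⟨a, b, t, rfl⟩
  | [] => simp at hlen
  | [a] => simp at hlen

lemma sum_F1 {n : ℕ} (hn : 1 ≤ n) : ∑ l ∈ F1 n, pterm l = -1 := by
  have : F1 n = {[n]} := by
    ext l
    rw [F1, Finset.mem_filter, mem_hS, Finset.mem_singleton]
    constructor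
    · rintro ⟨⟨⟨hne, hs, hpos⟩, hp⟩, hlen⟩
      match l with
      | [] => exact absurd rfl hne
      | [a] => rw [perim_cons] at hp; simp at hp; rw [hp]
      | a :: b :: t => simp at hlen
    · rintro rfl
      refine ⟨⟨⟨by simp, by simp, ?_⟩, ?_⟩, by simp⟩
      · intro x hx; simp at hx; omega
      · rw [perim_cons]; simp
  rw [this, Finset.sum_singleton]
  simp [pterm, repStat_singleton]

lemma sum_F2 (m : ℕ) :
    ∑ l ∈ F2 (m + 2), pterm l = -Polynomial.X * ∑ l ∈ hS (m + 1), pterm l := by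
  rw [Finset.mul_sum]
  refine Finset.sum_nbij' (fun l => l.tail) (fun l => l.headI :: l) ?_ ?_ ?_ ?_ ?_
  · intro l hl
    obtain ⟨hG', hcond⟩ := Finset.mem_filter.1 hl
    obtain ⟨a, b, t, rfl⟩ := exists_cons_cons_of_mem_hG hG'
    obtain ⟨⟨hpart, hp⟩, -⟩ := mem_hG_iff.1 hG'
    have hab : a = b := by simpa using hcond
    show (b :: t) ∈ hS (m + 1)
    rw [mem_hS]
    refine ⟨(isPartition_cons_cons.1 hpart).2, ?_⟩
    rw [perim_cons] at hp ⊢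
    simp only [List.length_cons] at hp
    omega
  · intro l hl
    obtain ⟨⟨hne, hs, hpos⟩, hp⟩ := mem_hS.1 hl
    match l with
    | a :: t =>
      show (a :: a :: t) ∈ F2 (m + 2)
      refine Finset.mem_filter.2 ⟨mem_hG_iff.2 ⟨⟨?_, ?_⟩, by simp⟩, by simp⟩
      · exact isPartition_cons_cons.2 ⟨le_refl a, ⟨hne, hs, hpos⟩⟩
      · rw [perim_cons] at hp ⊢
        simp only [List.length_cons]
        omega
  · intro l hl
    obtain ⟨hG', hcond⟩ := Finset.mem_filter.1 hl
    obtain ⟨a, b, t, rfl⟩ := exists_cons_cons_of_mem_hG hG'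
    have hab : a = b := by simpa using hcond
    simp [hab]
  · intro l _
    rfl
  · intro l hl
    obtain ⟨hG', hcond⟩ := Finset.mem_filter.1 hl
    obtain ⟨a, b, t, rfl⟩ := exists_cons_cons_of_mem_hG hG'
    have hab : a = b := by simpa using hcond
    subst hab
    show pterm (a :: a :: t) = -X * pterm (a :: t)
    simp only [pterm, List.length_cons, repStat_cons_cons, if_pos rfl, if_true]
    ring

lemma sum_F3 (m : ℕ) :
    ∑ l ∈ F3 (m + 3), pterm l = -∑ l ∈ hS (m + 1), pterm l := by
  have h : ∑ l ∈ F3 (m + 3), pterm l = ∑ l ∈ hS (m + 1), -pterm l := by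
    refine Finset.sum_nbij' (fun l => l.tail) (fun l => (l.headI + 1) :: l) ?_ ?_ ?_ ?_ ?_
    · intro l hl
      obtain ⟨hG2', hcond⟩ := Finset.mem_filter.1 hl
      obtain ⟨hG', hne2⟩ := Finset.mem_filter.1 hG2'
      obtain ⟨a, b, t, rfl⟩ := exists_cons_cons_of_mem_hG hG'
      obtain ⟨⟨hpart, hp⟩, -⟩ := mem_hG_iff.1 hG'
      have hab : a = b + 1 := by simpa using hcond
      show (b :: t) ∈ hS (m + 1)
      rw [mem_hS]
      refine ⟨(isPartition_cons_cons.1 hpart).2, ?_⟩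
      rw [perim_cons] at hp ⊢
      simp only [List.length_cons] at hp
      omega
    · intro l hl
      obtain ⟨⟨hne, hs, hpos⟩, hp⟩ := mem_hS.1 hl
      match l with
      | a :: t =>
        show ((a + 1) :: a :: t) ∈ F3 (m + 3)
        refine Finset.mem_filter.2 ⟨Finset.mem_filter.2 ⟨mem_hG_iff.2 ⟨⟨?_, ?_⟩, by simp⟩,
          by simp⟩, by simp⟩
        · exact isPartition_cons_cons.2 ⟨by omega, ⟨hne, hs, hpos⟩⟩
        · rw [perim_cons] at hp ⊢
          simp only [List.length_cons]
          omega
    · intro l hl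
      obtain ⟨hG2', hcond⟩ := Finset.mem_filter.1 hl
      obtain ⟨hG', hne2⟩ := Finset.mem_filter.1 hG2'
      obtain ⟨a, b, t, rfl⟩ := exists_cons_cons_of_mem_hG hG'
      have hab : a = b + 1 := by simpa using hcond
      simp [hab]
    · intro l _
      rfl
    · intro l hl
      obtain ⟨hG2', hcond⟩ := Finset.mem_filter.1 hl
      obtain ⟨hG', hne2⟩ := Finset.mem_filter.1 hG2'
      obtain ⟨a, b, t, rfl⟩ := exists_cons_cons_of_mem_hG hG'
      have hab : a = b + 1 := by simpa using hcond
      have hab' : ¬ (a = b) := by omega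
      show pterm (a :: b :: t) = -pterm (b :: t)
      simp only [pterm, List.length_cons, repStat_cons_cons, if_neg hab']
      ring
  rw [h]
  exact Finset.sum_neg_distrib (f := pterm)

lemma sum_F4 (m : ℕ) :
    ∑ l ∈ F4 (m + 3), pterm l = ∑ l ∈ hG2 (m + 2), pterm l := by
  refine Finset.sum_nbij' (fun l => (l.headI - 1) :: l.tail) (fun l => (l.headI + 1) :: l.tail)
    ?_ ?_ ?_ ?_ ?_
  · intro l hl
    obtain ⟨hG2', hcond⟩ := Finset.mem_filter.1 hl
    obtain ⟨hG', hcond2⟩ := Finset.mem_filter.1 hG2'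
    obtain ⟨a, b, t, rfl⟩ := exists_cons_cons_of_mem_hG hG'
    obtain ⟨⟨hpart, hp⟩, -⟩ := mem_hG_iff.1 hG'
    have hba : b ≤ a := (isPartition_cons_cons.1 hpart).1
    have h1 : ¬ (a = b) := by simpa using hcond2
    have h2 : ¬ (a = b + 1) := by simpa using hcond
    have hge : b + 2 ≤ a := by omega
    show ((a - 1) :: b :: t) ∈ hG2 (m + 2)
    refine Finset.mem_filter.2 ⟨mem_hG_iff.2 ⟨⟨?_, ?_⟩, by simp⟩, ?_⟩
    · exact isPartition_cons_cons.2 ⟨by omega, (isPartition_cons_cons.1 hpart).2⟩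
    · rw [perim_cons] at hp ⊢
      simp only [List.length_cons] at hp ⊢
      omega
    · simp only [List.headI, List.tail_cons]
      omega
  · intro l hl
    obtain ⟨hG', hcond⟩ := Finset.mem_filter.1 hl
    obtain ⟨a, b, t, rfl⟩ := exists_cons_cons_of_mem_hG hG'
    obtain ⟨⟨hpart, hp⟩, -⟩ := mem_hG_iff.1 hG'
    have hba : b ≤ a := (isPartition_cons_cons.1 hpart).1
    have h1 : ¬ (a = b) := by simpa using hcond
    show ((a + 1) :: b :: t) ∈ F4 (m + 3)
    refine Finset.mem_filter.2 ⟨Finset.mem_filter.2 ⟨mem_hG_iff.2 ⟨⟨?_, ?_⟩, by simp⟩, ?_⟩, ?_⟩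
    · exact isPartition_cons_cons.2 ⟨by omega, (isPartition_cons_cons.1 hpart).2⟩
    · rw [perim_cons] at hp ⊢
      simp only [List.length_cons] at hp ⊢
      omega
    · simp only [List.headI, List.tail_cons]
      omega
    · simp only [List.headI, List.tail_cons]
      omega
  · intro l hl
    obtain ⟨hG2', hcond⟩ := Finset.mem_filter.1 hl
    obtain ⟨hG', hcond2⟩ := Finset.mem_filter.1 hG2'
    obtain ⟨a, b, t, rfl⟩ := exists_cons_cons_of_mem_hG hG'
    obtain ⟨⟨hpart, hp⟩, -⟩ := mem_hG_iff.1 hG'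
    have hba : b ≤ a := (isPartition_cons_cons.1 hpart).1
    have h1 : ¬ (a = b) := by simpa using hcond2
    have ha : a - 1 + 1 = a := by omega
    show ((a - 1 + 1) :: b :: t) = a :: b :: t
    rw [ha]
  · intro l hl
    obtain ⟨hG', hcond⟩ := Finset.mem_filter.1 hl
    obtain ⟨a, b, t, rfl⟩ := exists_cons_cons_of_mem_hG hG'
    show ((a + 1 - 1) :: b :: t) = a :: b :: t
    rw [Nat.add_sub_cancel]
  · intro l hl
    obtain ⟨hG2', hcond⟩ := Finset.mem_filter.1 hl
    obtain ⟨hG', hcond2⟩ := Finset.mem_filter.1 hG2'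
    obtain ⟨a, b, t, rfl⟩ := exists_cons_cons_of_mem_hG hG'
    obtain ⟨⟨hpart, hp⟩, -⟩ := mem_hG_iff.1 hG'
    have hba : b ≤ a := (isPartition_cons_cons.1 hpart).1
    have h1 : ¬ (a = b) := by simpa using hcond2
    have h2 : ¬ (a = b + 1) := by simpa using hcond
    have h3 : ¬ (a - 1 = b) := by omega
    show pterm (a :: b :: t) = pterm ((a - 1) :: b :: t)
    simp only [pterm, List.length_cons, repStat_cons_cons, if_neg h1, if_neg h3]

lemma hG_one_empty : hG 1 = ∅ := by
  ext l
  simp only [Finset.notMem_empty, iff_false]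
  intro hl
  obtain ⟨a, b, t, rfl⟩ := exists_cons_cons_of_mem_hG hl
  obtain ⟨⟨hpart, hp⟩, -⟩ := mem_hG_iff.1 hl
  have ha : 0 < a := hpart.2.2 a (by simp)
  rw [perim_cons] at hp
  simp only [List.length_cons] at hp
  omega

lemma hG2_two_empty : hG2 2 = ∅ := by
  ext l
  simp only [Finset.notMem_empty, iff_false]
  intro hl
  obtain ⟨hG', hcond⟩ := Finset.mem_filter.1 hl
  obtain ⟨a, b, t, rfl⟩ := exists_cons_cons_of_mem_hG hG'
  obtain ⟨⟨hpart, hp⟩, -⟩ := mem_hG_iff.1 hG'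
  have hba : b ≤ a := (isPartition_cons_cons.1 hpart).1
  have hb : 0 < b := hpart.2.2 b (by simp)
  have h1 : ¬ (a = b) := by simpa using hcond
  rw [perim_cons] at hp
  simp only [List.length_cons] at hp
  omega

theorem hpoly_recurrence :
    hpoly 1 = -1 ∧ hpoly 2 = Polynomial.X - 1 ∧
    ∀ n, 3 ≤ n →
      hpoly n = (1 - Polynomial.X) * (hpoly (n - 1) - hpoly (n - 2)) := by
  have h1 : hpoly 1 = -1 := by
    rw [hpoly_eq, split_hS, sum_F1 (by norm_num), hG_one_empty]
    simp
  have h2 : hpoly 2 = Polynomial.X - 1 := by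
    have := sum_F2 0
    rw [hpoly_eq, split_hS, split_hG, sum_F1 (by norm_num), sum_F2 0, hG2_two_empty,
      ← hpoly_eq, h1]
    simp
    ring
  refine ⟨h1, h2, ?_⟩
  intro n hn
  obtain ⟨k, rfl⟩ : ∃ k, n = k + 3 := ⟨n - 3, by omega⟩
  have e1 : k + 3 - 1 = k + 2 := rfl
  have e2 : k + 3 - 2 = k + 1 := rfl
  rw [e1, e2]
  have hG2eq : ∑ l ∈ hG2 (k + 2), pterm l
      = hpoly (k + 2) + 1 + Polynomial.X * hpoly (k + 1) := by
    have hsplit := split_hS (k + 2)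
    rw [split_hG, sum_F1 (by omega), sum_F2 k, ← hpoly_eq, ← hpoly_eq] at hsplit
    linear_combination -hsplit
  have key : hpoly (k + 3) = -1 + (-Polynomial.X * hpoly (k + 2)) + (-hpoly (k + 1))
      + ∑ l ∈ hG2 (k + 2), pterm l := by
    rw [hpoly_eq, split_hS, split_hG, split_hG2, sum_F1 (by omega), sum_F2 (k + 1),
      sum_F3 k, sum_F4 k, ← hpoly_eq, ← hpoly_eq]
    ring
  rw [key, hG2eq]
  ring
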